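/- Let f₁ and f₂ be probability density functions on ℝ that are continuous, bounded, symmetric about zero, and strictly unimodal at zero (i.e., strictly increasing on (-∞,0] and strictly decreasing on [0,∞)). Then their convolution f(u) = ∫ f₁(v) f₂(u - v) dv is strictly unimodal at zero: for any 0 < u₁ < u₂, f(u₂) < f(u₁), and for any u₂ < u₁ < 0, f(u₂) < f(u₁). -/

import Mathlib

open MeasureTheory Set

lemma abs_lt_imp_lt {f : ℝ → ℝ} (hs : ∀ x, f (-x) = f x) (ha : StrictAntiOn f (Ici 0))
    {a b : ℝ} (h : |a| < |b|) : f b < f a := by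
  have h1 : f a = f |a| := by
    rcases abs_cases a with ⟨e, _⟩ | ⟨e, _⟩
    · rw [e]
    · rw [e, hs]
  have h2 : f b = f |b| := by
    rcases abs_cases b with ⟨e, _⟩ | ⟨e, _⟩
    · rw [e]
    · rw [e, hs]
  rw [h1, h2]
  exact ha (abs_nonneg a) (abs_nonneg b) h

lemma conv_integrable {f₁ f₂ : ℝ → ℝ} (hc₁ : Continuous f₁) (hc₂ : Continuous f₂)
    (hb₂ : ∃ M, ∀ x, f₂ x ≤ M) (hnn₂ : ∀ x, 0 ≤ f₂ x)
    (hI₁ : Integrable f₁) (u : ℝ) :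
    Integrable (fun v => f₁ v * f₂ (u - v)) := by
  obtain ⟨M, hM⟩ := hb₂
  have : Integrable (fun v => f₂ (u - v) * f₁ v) := by
    refine hI₁.bdd_mul (c := M) ?_ (ae_of_all _ fun v => ?_)
    · exact (hc₂.comp (continuous_const.sub continuous_id)).aestronglyMeasurable
    · rw [Real.norm_eq_abs, abs_of_nonneg (hnn₂ _)]; exact hM _
  simpa [mul_comm] using this

lemma conv_strict_lt {f₁ f₂ : ℝ → ℝ}
    (hc₁ : Continuous f₁) (hc₂ : Continuous f₂)
    (hb₂ : ∃ M, ∀ x, f₂ x ≤ M)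
    (hnn₁ : ∀ x, 0 ≤ f₁ x) (hnn₂ : ∀ x, 0 ≤ f₂ x)
    (hint₁ : ∫ x, f₁ x = 1)
    (hsym₁ : ∀ x, f₁ (-x) = f₁ x) (hsym₂ : ∀ x, f₂ (-x) = f₂ x)
    (hanti₁ : StrictAntiOn f₁ (Ici 0)) (hanti₂ : StrictAntiOn f₂ (Ici 0)) :
    ∀ u₁ u₂ : ℝ, 0 < u₁ → u₁ < u₂ →
      (∫ v, f₁ v * f₂ (u₂ - v)) < ∫ v, f₁ v * f₂ (u₁ - v) := by
  intro u₁ u₂ hu₁ h12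
  have hI₁ : Integrable f₁ := by
    by_contra h
    rw [integral_undef h] at hint₁
    norm_num at hint₁
  set m : ℝ := (u₁ + u₂) / 2 with hm
  have hm0 : 0 < m := by simp only [hm]; linarith
  set F : ℝ → ℝ := fun v => f₁ v * (f₂ (u₁ - v) - f₂ (u₂ - v)) with hF
  have hIa := conv_integrable hc₁ hc₂ hb₂ hnn₂ hI₁ u₁
  have hIb := conv_integrable hc₁ hc₂ hb₂ hnn₂ hI₁ u₂
  have hIF : Integrable F := by
    have := hIa.sub hIb
    refine this.congr (ae_of_all _ fun v => ?_)
    simp [hF, mul_sub]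
  -- reflected function
  have hIF' : Integrable (fun v => F (2 * m - v)) := hIF.comp_sub_left (2 * m)
  -- the symmetrized function
  set G : ℝ → ℝ := fun v => F v + F (2 * m - v) with hG
  have hGform : ∀ v, G v = (f₁ v - f₁ (2 * m - v)) * (f₂ (u₁ - v) - f₂ (u₂ - v)) := by
    intro v
    have e1 : u₁ - (2 * m - v) = -(u₂ - v) := by simp only [hm]; ring
    have e2 : u₂ - (2 * m - v) = -(u₁ - v) := by simp only [hm]; ring
    simp only [hG, hF, e1, e2, hsym₂]
    ring
  have hGpos : ∀ v, v ≠ m → 0 < G v := by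
    intro v hv
    rw [hGform]
    rcases lt_or_gt_of_ne hv with h | h
    · -- v < m : both factors positive
      have h1 : f₁ (2 * m - v) < f₁ v := by
        apply abs_lt_imp_lt hsym₁ hanti₁
        rw [abs_of_pos (show (0:ℝ) < 2 * m - v by linarith), abs_lt]
        exact ⟨by linarith, by linarith⟩
      have h2 : f₂ (u₂ - v) < f₂ (u₁ - v) := by
        apply abs_lt_imp_lt hsym₂ hanti₂
        rw [abs_of_pos (show (0:ℝ) < u₂ - v by simp only [hm] at h; linarith), abs_lt]
        refine ⟨by simp only [hm] at h; linarith, by linarith⟩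
      nlinarith
    · -- v > m : both factors negative
      have h1 : f₁ v < f₁ (2 * m - v) := by
        apply abs_lt_imp_lt hsym₁ hanti₁
        rw [abs_of_pos (show (0:ℝ) < v by linarith), abs_lt]
        exact ⟨by linarith, by linarith⟩
      have h2 : f₂ (u₁ - v) < f₂ (u₂ - v) := by
        apply abs_lt_imp_lt hsym₂ hanti₂
        have hvu : u₁ < v := by simp only [hm] at h; linarith
        rw [abs_of_neg (show u₁ - v < 0 by linarith), abs_lt]
        refine ⟨by linarith, by simp only [hm] at h; linarith⟩
      nlinarith
  have hGnn : 0 ≤ G := by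
    intro v
    rcases eq_or_ne v m with h | h
    · rw [hGform, h]
      have : 2 * m - m = m := by ring
      rw [this]
      simp
    · exact (hGpos v h).le
  have hIG : Integrable G := hIF.add hIF'
  have hGint : 0 < ∫ v, G v := by
    rw [integral_pos_iff_support_of_nonneg hGnn hIG]
    have hsub : Ioi m ⊆ Function.support G := by
      intro v hv
      exact (hGpos v (ne_of_gt hv)).ne'
    calc (0 : ENNReal) < ⊤ := by simp
    _ = volume (Ioi m) := (Real.volume_Ioi).symm
    _ ≤ volume (Function.support G) := measure_mono hsub
  have hrefl : ∫ v, F (2 * m - v) = ∫ v, F v := integral_sub_left_eq_self F volume (2 * m)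
  have hGeq : ∫ v, G v = 2 * ∫ v, F v := by
    rw [hG]
    rw [integral_add hIF hIF', hrefl]
    ring
  have hFpos : 0 < ∫ v, F v := by linarith [hGeq ▸ hGint]
  have hsplit : ∫ v, F v = (∫ v, f₁ v * f₂ (u₁ - v)) - ∫ v, f₁ v * f₂ (u₂ - v) := by
    rw [← integral_sub hIa hIb]
    congr 1
    ext v
    simp only [hF]
    ring
  linarith [hsplit ▸ hFpos]

/-- the convolution of two continuous, bounded, symmetric,
strictly unimodal probability densities is strictly unimodal at zero. -/
theorem convolution_strictly_unimodal
    (f₁ f₂ : ℝ → ℝ)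
    (hc₁ : Continuous f₁) (hc₂ : Continuous f₂)
    (hb₁ : ∃ M, ∀ x, f₁ x ≤ M) (hb₂ : ∃ M, ∀ x, f₂ x ≤ M)
    (hnn₁ : ∀ x, 0 ≤ f₁ x) (hnn₂ : ∀ x, 0 ≤ f₂ x)
    (hint₁ : ∫ x, f₁ x = 1) (hint₂ : ∫ x, f₂ x = 1)
    (hsym₁ : ∀ x, f₁ (-x) = f₁ x) (hsym₂ : ∀ x, f₂ (-x) = f₂ x)
    (hmono₁ : StrictMonoOn f₁ (Iic 0)) (hanti₁ : StrictAntiOn f₁ (Ici 0))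
    (hmono₂ : StrictMonoOn f₂ (Iic 0)) (hanti₂ : StrictAntiOn f₂ (Ici 0)) :
    (∀ u₁ u₂ : ℝ, 0 < u₁ → u₁ < u₂ →
      (∫ v, f₁ v * f₂ (u₂ - v)) < ∫ v, f₁ v * f₂ (u₁ - v)) ∧
    (∀ u₁ u₂ : ℝ, u₂ < u₁ → u₁ < 0 →
      (∫ v, f₁ v * f₂ (u₂ - v)) < ∫ v, f₁ v * f₂ (u₁ - v)) := by
  have key := conv_strict_lt hc₁ hc₂ hb₂ hnn₁ hnn₂ hint₁ hsym₁ hsym₂ hanti₁ hanti₂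
  refine ⟨key, ?_⟩
  intro u₁ u₂ h21 hu₁
  have hflip : ∀ u : ℝ, (∫ v, f₁ v * f₂ (u - v)) = ∫ v, f₁ v * f₂ (-u - v) := by
    intro u
    have := integral_neg_eq_self (fun v => f₁ v * f₂ (u - v)) volume
    rw [← this]
    congr 1
    ext v
    rw [hsym₁]
    congr 1
    have e : u - -v = u + v := by ring
    rw [e, ← hsym₂ (u + v)]
    congr 1
    ring
  rw [hflip u₁, hflip u₂]
  exact key (-u₁) (-u₂) (by linarith) (by linarith)
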